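/- arXiv:2503.05083 — 2 statements merged into one kernel-verified Lean document; each statement's English description precedes it below -/
import Mathlib

section
/- Let B ∈ R^{n×m}, K ∈ R^{m×n}, P_d an n×n positive definite diagonal matrix, and ω, μ, δ > 0 with ωμ > δ². Suppose KᵀBᵀP_d + P_d B K + ω·I_n + μ·P_d² ≺ 0 (negative definite). Then for every vector s ∈ R^n with ‖s‖² ≥ 1 and every f ∈ R^n with ‖f‖ ≤ δ, we have sᵀP_d(BKs + f) ≤ -(1/2)(ω - δ²/μ) < 0. -/
open Matrix

/-- Core inequality of Theorem 1 (VSC): negative definiteness of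
    `Kᵀ Bᵀ P_d + P_d B K + ω I + μ P_d²` forces
    `sᵀ P_d (B K s + f) ≤ -(ω - δ²/μ)/2 < 0` for every `s` with `‖s‖² ≥ 1`
    and every disturbance `f` with `‖f‖ ≤ δ`. -/
theorem stmt_6 (n m : ℕ) (B : Matrix (Fin n) (Fin m) ℝ) (K : Matrix (Fin m) (Fin n) ℝ)
    (p : Fin n → ℝ) (hp : ∀ j, 0 < p j) (ω μ δ : ℝ)
    (hω : 0 < ω) (hμ : 0 < μ) (hδ : 0 < δ) (hωμ : δ^2 < ω * μ)
    (Pd : Matrix (Fin n) (Fin n) ℝ) (hPd : Pd = Matrix.diagonal p)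
    (hneg : ∀ x : Fin n → ℝ, x ≠ 0 →
      x ⬝ᵥ (Kᵀ * Bᵀ * Pd + Pd * B * K + ω • (1 : Matrix (Fin n) (Fin n) ℝ)
        + μ • (Pd * Pd)) *ᵥ x < 0) :
    ∀ s f : Fin n → ℝ, 1 ≤ s ⬝ᵥ s → Real.sqrt (f ⬝ᵥ f) ≤ δ →
      s ⬝ᵥ Pd *ᵥ (B *ᵥ (K *ᵥ s) + f) ≤ -(1/2) * (ω - δ^2 / μ) ∧
        -(1/2) * (ω - δ^2 / μ) < 0 := by
  intro s f hs hf
  have hPsym : Pdᵀ = Pd := by rw [hPd, Matrix.diagonal_transpose]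
  have hs0 : s ≠ 0 := by
    intro h
    simp [h, zero_dotProduct] at hs
    linarith
  set x := Pd *ᵥ s with hx
  set y := B *ᵥ (K *ᵥ s) with hy
  -- dot products with transposes
  have hPy : s ⬝ᵥ Pd *ᵥ y = x ⬝ᵥ y := by
    rw [Matrix.dotProduct_mulVec, ← hPsym, Matrix.vecMul_transpose]
  have hterm1 : s ⬝ᵥ (Kᵀ * Bᵀ * Pd) *ᵥ s = y ⬝ᵥ x := by
    rw [← Matrix.mulVec_mulVec, ← Matrix.mulVec_mulVec,
      Matrix.dotProduct_mulVec, Matrix.vecMul_transpose,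
      Matrix.dotProduct_mulVec, Matrix.vecMul_transpose]
  have hterm2 : s ⬝ᵥ (Pd * B * K) *ᵥ s = x ⬝ᵥ y := by
    rw [← Matrix.mulVec_mulVec, ← Matrix.mulVec_mulVec, ← hy, hPy]
  have hterm4 : s ⬝ᵥ (Pd * Pd) *ᵥ s = x ⬝ᵥ x := by
    rw [← Matrix.mulVec_mulVec, Matrix.dotProduct_mulVec, ← hPsym,
      Matrix.vecMul_transpose, hPsym]
  have hneg' := hneg s hs0
  rw [Matrix.add_mulVec, Matrix.add_mulVec, Matrix.add_mulVec,
    dotProduct_add, dotProduct_add, dotProduct_add,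
    Matrix.smul_mulVec, Matrix.smul_mulVec,
    dotProduct_smul, dotProduct_smul, Matrix.one_mulVec,
    hterm1, hterm2, hterm4, dotProduct_comm y x] at hneg'
  -- hneg' : x ⬝ᵥ y + x ⬝ᵥ y + ω • (s ⬝ᵥ s) + μ • (x ⬝ᵥ x) < 0
  have hxy : x ⬝ᵥ f ≤ (μ/2) * (x ⬝ᵥ x) + (1/(2*μ)) * (f ⬝ᵥ f) := by
    have : ∀ i, x i * f i ≤ (μ/2) * (x i * x i) + (1/(2*μ)) * (f i * f i) := by
      intro i
      have h2 : (0:ℝ) < 2 * μ := by positivity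
      rw [div_mul_eq_mul_div, div_mul_eq_mul_div, div_add_div _ _ (by norm_num) h2.ne',
        le_div_iff₀ (by positivity)]
      nlinarith [sq_nonneg (μ * x i - f i)]
    calc x ⬝ᵥ f = ∑ i, x i * f i := rfl
      _ ≤ ∑ i, ((μ/2) * (x i * x i) + (1/(2*μ)) * (f i * f i)) :=
          Finset.sum_le_sum fun i _ => this i
      _ = (μ/2) * (x ⬝ᵥ x) + (1/(2*μ)) * (f ⬝ᵥ f) := by
          rw [Finset.sum_add_distrib, ← Finset.mul_sum, ← Finset.mul_sum]; rfl
  have hff : f ⬝ᵥ f ≤ δ^2 := by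
    have h0 : 0 ≤ f ⬝ᵥ f := Finset.sum_nonneg fun i _ => mul_self_nonneg (f i)
    have := Real.sqrt_le_sqrt (le_of_eq (rfl : f ⬝ᵥ f = f ⬝ᵥ f))
    nlinarith [Real.sq_sqrt h0, Real.sqrt_nonneg (f ⬝ᵥ f)]
  have hgoal : s ⬝ᵥ Pd *ᵥ (y + f) ≤ -(1/2) * (ω - δ^2 / μ) := by
    rw [Matrix.mulVec_add, dotProduct_add, hPy]
    have hss : ω * 1 ≤ ω * (s ⬝ᵥ s) := by
      apply mul_le_mul_of_nonneg_left hs hω.le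
    have hPf : s ⬝ᵥ Pd *ᵥ f = x ⬝ᵥ f := by
      rw [Matrix.dotProduct_mulVec, ← hPsym, Matrix.vecMul_transpose]
    rw [hPf]
    have hd : (1/(2*μ)) * (f ⬝ᵥ f) ≤ (1/(2*μ)) * δ^2 :=
      mul_le_mul_of_nonneg_left hff (by positivity)
    have hμne : μ ≠ 0 := hμ.ne'
    have heq : (1/(2*μ)) * δ^2 = (1/2) * (δ^2/μ) := by field_simp
    simp only [smul_eq_mul] at hneg'
    nlinarith [hneg', hxy, hd]
  refine ⟨hgoal, ?_⟩
  have : δ^2 / μ < ω := (div_lt_iff₀ hμ).mpr (by linarith [hωμ])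
  nlinarith
end

section
/- Let P, W be n×n symmetric matrices with P ≻ 0, W ≻ 0, B ∈ R^{n×m}, K ∈ R^{m×n}, μ > 0, δ ≥ 0. Suppose KᵀBᵀP + PBK + μ⁻¹δ²·I_n + μ·P² + W ≺ 0. Then for every σ ≠ 0 in R^n and every f ∈ R^n with ‖f‖ ≤ δ, 2σᵀP(BKσ/‖σ‖ + f) < -(1/‖σ‖)·σᵀWσ < 0. -/
open Matrix

private lemma dot_transpose_swap (n : ℕ) (A : Matrix (Fin n) (Fin n) ℝ) (x y : Fin n → ℝ) :
    x ⬝ᵥ Aᵀ *ᵥ y = y ⬝ᵥ A *ᵥ x := by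
  rw [dotProduct_mulVec, vecMul_transpose, dotProduct_comm]

private lemma dot_self_nonneg' (n : ℕ) (v : Fin n → ℝ) : 0 ≤ v ⬝ᵥ v :=
  Finset.sum_nonneg fun i _ => mul_self_nonneg _

/-- Core derivative estimate of Theorem 2 (UVC): if
    `Kᵀ Bᵀ P + P B K + μ⁻¹ δ² I + μ P² + W ≺ 0` then, along `σ' = BKσ/‖σ‖ + f`
    with `‖f‖ ≤ δ`, the derivative of `σᵀ P σ` satisfies
    `2 σᵀ P (BKσ/‖σ‖ + f) < -(1/‖σ‖) σᵀ W σ < 0`, for every `σ ≠ 0`. -/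
theorem stmt_7 (n m : ℕ) (P W : Matrix (Fin n) (Fin n) ℝ)
    (hP : P.PosDef) (hW : W.PosDef)
    (B : Matrix (Fin n) (Fin m) ℝ) (K : Matrix (Fin m) (Fin n) ℝ)
    (μ δ : ℝ) (hμ : 0 < μ) (hδ : 0 ≤ δ)
    (hneg : ∀ x : Fin n → ℝ, x ≠ 0 →
      x ⬝ᵥ (Kᵀ * Bᵀ * P + P * B * K + (μ⁻¹ * δ^2) • (1 : Matrix (Fin n) (Fin n) ℝ)
        + μ • (P * P) + W) *ᵥ x < 0) :
    ∀ σ f : Fin n → ℝ, σ ≠ 0 → Real.sqrt (f ⬝ᵥ f) ≤ δ →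
      2 * (σ ⬝ᵥ P *ᵥ ((Real.sqrt (σ ⬝ᵥ σ))⁻¹ • ((B * K) *ᵥ σ) + f))
          < -(Real.sqrt (σ ⬝ᵥ σ))⁻¹ * (σ ⬝ᵥ W *ᵥ σ) ∧
        -(Real.sqrt (σ ⬝ᵥ σ))⁻¹ * (σ ⬝ᵥ W *ᵥ σ) < 0 := by
  intro σ f hσ hf
  have hPsymm : Pᵀ = P := hP.isHermitian
  set s := Real.sqrt (σ ⬝ᵥ σ) with hs_def
  have hσσ : 0 < σ ⬝ᵥ σ := by
    have hne : σ ⬝ᵥ σ ≠ 0 := fun h => hσ ((dotProduct_self_eq_zero).mp h)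
    exact lt_of_le_of_ne (dot_self_nonneg' n σ) (Ne.symm hne)
  have hs : 0 < s := Real.sqrt_pos.mpr hσσ
  have hs2 : s ^ 2 = σ ⬝ᵥ σ := Real.sq_sqrt hσσ.le
  set q := σ ⬝ᵥ P *ᵥ ((B * K) *ᵥ σ) with hq_def
  set pσ := P *ᵥ σ with hpσ_def
  set w := σ ⬝ᵥ W *ᵥ σ with hw_def
  have hw_pos : 0 < w := by simpa using hW.dotProduct_mulVec_pos hσ
  have hvm : σ ᵥ* P = pσ := by rw [← mulVec_transpose, hPsymm]
  -- expand hneg at σ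
  have hmain : 2 * q + μ⁻¹ * δ ^ 2 * (σ ⬝ᵥ σ) + μ * (pσ ⬝ᵥ pσ) + w < 0 := by
    have h := hneg σ hσ
    simp only [add_mulVec, dotProduct_add, smul_mulVec, one_mulVec,
      dotProduct_smul] at h
    have h1 : σ ⬝ᵥ (Kᵀ * Bᵀ * P) *ᵥ σ = q := by
      have ht : Kᵀ * Bᵀ * P = (P * B * K)ᵀ := by
        rw [transpose_mul, transpose_mul, hPsymm, Matrix.mul_assoc]
      rw [ht, dot_transpose_swap, hq_def, Matrix.mul_assoc, ← mulVec_mulVec]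
    have h2 : σ ⬝ᵥ (P * B * K) *ᵥ σ = q := by
      rw [hq_def, Matrix.mul_assoc, ← mulVec_mulVec]
    have h3 : σ ⬝ᵥ (P * P) *ᵥ σ = pσ ⬝ᵥ pσ := by
      rw [← mulVec_mulVec, dotProduct_mulVec, hvm]
    rw [h1, h2, h3] at h
    simp only [smul_eq_mul] at h
    linarith
  have hb2 : 0 ≤ pσ ⬝ᵥ pσ := dot_self_nonneg' n pσ
  set r := Real.sqrt (pσ ⬝ᵥ pσ) with hr_def
  have hr2 : r ^ 2 = pσ ⬝ᵥ pσ := Real.sq_sqrt hb2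
  have hr0 : 0 ≤ r := Real.sqrt_nonneg _
  -- Cauchy–Schwarz
  have hcs : pσ ⬝ᵥ f ≤ r * δ := by
    have hsq : (pσ ⬝ᵥ f) ^ 2 ≤ (pσ ⬝ᵥ pσ) * (f ⬝ᵥ f) := by
      have h := Finset.sum_mul_sq_le_sq_mul_sq Finset.univ pσ f
      simpa [dotProduct, sq] using h
    have h1 : pσ ⬝ᵥ f ≤ Real.sqrt ((pσ ⬝ᵥ pσ) * (f ⬝ᵥ f)) := by
      calc pσ ⬝ᵥ f ≤ |pσ ⬝ᵥ f| := le_abs_self _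
        _ = Real.sqrt ((pσ ⬝ᵥ f) ^ 2) := (Real.sqrt_sq_eq_abs _).symm
        _ ≤ _ := Real.sqrt_le_sqrt hsq
    calc pσ ⬝ᵥ f ≤ Real.sqrt ((pσ ⬝ᵥ pσ) * (f ⬝ᵥ f)) := h1
      _ = r * Real.sqrt (f ⬝ᵥ f) := Real.sqrt_mul hb2 _
      _ ≤ r * δ := mul_le_mul_of_nonneg_left hf hr0
  -- AM–GM
  have hamgm : 2 * (r * δ) * s ≤ μ * (pσ ⬝ᵥ pσ) + μ⁻¹ * δ ^ 2 * (σ ⬝ᵥ σ) := by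
    rw [← hr2, ← hs2]
    have key : 2 * (r * δ) * s * μ ≤ μ ^ 2 * r ^ 2 + δ ^ 2 * s ^ 2 := by
      nlinarith [sq_nonneg (μ * r - δ * s)]
    have h := mul_le_mul_of_nonneg_left key (inv_nonneg.mpr hμ.le)
    calc 2 * (r * δ) * s = μ⁻¹ * (2 * (r * δ) * s * μ) := by
          field_simp
      _ ≤ μ⁻¹ * (μ ^ 2 * r ^ 2 + δ ^ 2 * s ^ 2) := h
      _ = μ * r ^ 2 + μ⁻¹ * δ ^ 2 * s ^ 2 := by
          field_simp
  -- rewrite the goal LHS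
  have hlhs : σ ⬝ᵥ P *ᵥ (s⁻¹ • ((B * K) *ᵥ σ) + f) = s⁻¹ * q + pσ ⬝ᵥ f := by
    rw [mulVec_add, dotProduct_add, mulVec_smul, dotProduct_smul, smul_eq_mul]
    congr 1
    rw [dotProduct_mulVec, hvm]
  constructor
  · rw [hlhs, show -s⁻¹ * w = s⁻¹ * (-w) by ring]
    have hstep : 2 * q + 2 * (pσ ⬝ᵥ f) * s < -w := by
      have h1 : 2 * (pσ ⬝ᵥ f) * s ≤ 2 * (r * δ) * s := by
        have := mul_le_mul_of_nonneg_right hcs hs.le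
        nlinarith
      linarith
    have h2 : s⁻¹ * (2 * q + 2 * (pσ ⬝ᵥ f) * s) < s⁻¹ * (-w) :=
      mul_lt_mul_of_pos_left hstep (inv_pos.mpr hs)
    calc 2 * (s⁻¹ * q + pσ ⬝ᵥ f) = s⁻¹ * (2 * q + 2 * (pσ ⬝ᵥ f) * s) := by
          field_simp
      _ < s⁻¹ * (-w) := h2
  · have : 0 < s⁻¹ * w := mul_pos (inv_pos.mpr hs) hw_pos
    linarith
end
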